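/- The real number cot(π/16) equals 1 + √2 + √(4 + 2√2), and the field ℚ(cot(π/16)) equals the field ℚ(√(4 + 2√2)). -/

import Mathlib

open Real

/-- Key radical identity: `2 + √(2+√2) = (1 + √2 + √(4+2√2)) * √(2-√2)`. -/
lemma radical_key : 2 + Real.sqrt (2 + Real.sqrt 2)
    = (1 + Real.sqrt 2 + Real.sqrt (4 + 2 * Real.sqrt 2)) * Real.sqrt (2 - Real.sqrt 2) := by
  have hr0 : (0:ℝ) ≤ Real.sqrt 2 := Real.sqrt_nonneg 2
  have hr : Real.sqrt 2 ^ 2 = 2 := Real.sq_sqrt (by norm_num)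
  have hr2 : Real.sqrt 2 ≤ 2 := by nlinarith
  have ha0 : (0:ℝ) ≤ Real.sqrt (2 + Real.sqrt 2) := Real.sqrt_nonneg _
  have hb0 : (0:ℝ) ≤ Real.sqrt (2 - Real.sqrt 2) := Real.sqrt_nonneg _
  have hs0 : (0:ℝ) ≤ Real.sqrt (4 + 2 * Real.sqrt 2) := Real.sqrt_nonneg _
  have ha : Real.sqrt (2 + Real.sqrt 2) ^ 2 = 2 + Real.sqrt 2 := Real.sq_sqrt (by positivity)
  have hb : Real.sqrt (2 - Real.sqrt 2) ^ 2 = 2 - Real.sqrt 2 := Real.sq_sqrt (by linarith)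
  have hs : Real.sqrt (4 + 2 * Real.sqrt 2) ^ 2 = 4 + 2 * Real.sqrt 2 := Real.sq_sqrt (by positivity)
  set r := Real.sqrt 2
  set a := Real.sqrt (2 + r)
  set b := Real.sqrt (2 - r)
  set s := Real.sqrt (4 + 2 * r)
  -- a * b = r
  have hab : a * b = r := by
    have h1 : (a*b - r) * (a*b + r) = 0 := by linear_combination b^2 * ha + (2 + r) * hb - 2 * hr
    rcases mul_eq_zero.mp h1 with h | h
    · linarith
    · have h2 : 0 ≤ a * b := mul_nonneg ha0 hb0
      nlinarith
  -- s = r * a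
  have hs' : s = r * a := by
    have h1 : (s - r*a) * (s + r*a) = 0 := by linear_combination hs - a^2 * hr - 2 * ha
    rcases mul_eq_zero.mp h1 with h | h
    · linarith
    · have h2 : 0 ≤ r * a := mul_nonneg hr0 ha0
      nlinarith
  -- a = b * (1 + r)
  have hA : a = b * (1 + r) := by
    have h1 : (a - b*(1+r)) * (a + b*(1+r)) = 0 := by
      linear_combination ha - (1+r)^2 * hb + r * hr
    rcases mul_eq_zero.mp h1 with h | h
    · linarith
    · have h2 : 0 ≤ b * (1+r) := mul_nonneg hb0 (by linarith)
      nlinarith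
  rw [hs', hA]
  linear_combination (-(r*(1+r)))*hb + (r-1)*hr

theorem cot_pi_div_sixteen :
    Real.cot (Real.pi / 16) = 1 + Real.sqrt 2 + Real.sqrt (4 + 2 * Real.sqrt 2) ∧
      IntermediateField.adjoin ℚ {Real.cot (Real.pi / 16)} =
        IntermediateField.adjoin ℚ {Real.sqrt (4 + 2 * Real.sqrt 2)} := by
  have hπ : (0:ℝ) < π := Real.pi_pos
  have hπ4 : π < 4 := by linarith [Real.pi_lt_d2]
  have hsin : 0 < Real.sin (π/16) :=
    Real.sin_pos_of_pos_of_lt_pi (by linarith) (by nlinarith)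
  have hcos : 0 < Real.cos (π/16) :=
    Real.cos_pos_of_mem_Ioo ⟨by nlinarith, by nlinarith⟩
  have hsin8 : Real.sin (π/8) = 2 * Real.sin (π/16) * Real.cos (π/16) := by
    rw [show π/8 = 2*(π/16) by ring, Real.sin_two_mul]
  have hcos8 : Real.cos (π/8) = 2 * Real.cos (π/16)^2 - 1 := by
    rw [show π/8 = 2*(π/16) by ring, Real.cos_two_mul]
  have hval : 1 + Real.cos (π/8)
      = (1 + Real.sqrt 2 + Real.sqrt (4 + 2 * Real.sqrt 2)) * Real.sin (π/8) := by
    rw [Real.cos_pi_div_eight, Real.sin_pi_div_eight]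
    linear_combination radical_key / 2
  have main : Real.cot (π/16) = 1 + Real.sqrt 2 + Real.sqrt (4 + 2 * Real.sqrt 2) := by
    rw [Real.cot_eq_cos_div_sin, div_eq_iff (ne_of_gt hsin)]
    have h3 : Real.cos (π/16) * Real.cos (π/16)
        = ((1 + Real.sqrt 2 + Real.sqrt (4 + 2 * Real.sqrt 2)) * Real.sin (π/16))
            * Real.cos (π/16) := by
      rw [hsin8, hcos8] at hval
      linear_combination hval / 2
    exact mul_right_cancel₀ (ne_of_gt hcos) h3
  refine ⟨main, ?_⟩
  rw [main]
  have hr0 : (0:ℝ) ≤ Real.sqrt 2 := Real.sqrt_nonneg 2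
  have hr : Real.sqrt 2 ^ 2 = 2 := Real.sq_sqrt (by norm_num)
  have hs0 : (0:ℝ) ≤ Real.sqrt (4 + 2 * Real.sqrt 2) := Real.sqrt_nonneg _
  have hs : Real.sqrt (4 + 2 * Real.sqrt 2) ^ 2 = 4 + 2 * Real.sqrt 2 :=
    Real.sq_sqrt (by positivity)
  apply le_antisymm
  · rw [IntermediateField.adjoin_le_iff, Set.singleton_subset_iff]
    set K := IntermediateField.adjoin ℚ {Real.sqrt (4 + 2 * Real.sqrt 2)}
    have hsK : Real.sqrt (4 + 2 * Real.sqrt 2) ∈ K :=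
      IntermediateField.mem_adjoin_simple_self ℚ _
    have h2K : (2:ℝ) ∈ K := by
      have : ((2:ℚ):ℝ) ∈ K := IntermediateField.algebraMap_mem K (2:ℚ)
      simpa using this
    have hrK : Real.sqrt 2 ∈ K := by
      have heq : Real.sqrt 2
          = Real.sqrt (4 + 2 * Real.sqrt 2) * Real.sqrt (4 + 2 * Real.sqrt 2) / 2 - 2 := by
        linear_combination -hs / 2
      rw [heq]
      exact sub_mem (div_mem (mul_mem hsK hsK) h2K) h2K
    exact add_mem (add_mem (one_mem K) hrK) hsK
  · rw [IntermediateField.adjoin_le_iff, Set.singleton_subset_iff]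
    set L := IntermediateField.adjoin ℚ
      {1 + Real.sqrt 2 + Real.sqrt (4 + 2 * Real.sqrt 2)} with hLdef
    have hcL : (1 + Real.sqrt 2 + Real.sqrt (4 + 2 * Real.sqrt 2)) ∈ L :=
      IntermediateField.mem_adjoin_simple_self ℚ _
    set c := 1 + Real.sqrt 2 + Real.sqrt (4 + 2 * Real.sqrt 2) with hcdef
    have hc0 : c ≠ 0 := by positivity
    have h2L : (2:ℝ) ∈ L := by
      have : ((2:ℚ):ℝ) ∈ L := IntermediateField.algebraMap_mem L (2:ℚ)
      simpa using this
    have hrL : Real.sqrt 2 ∈ L := by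
      have heq : Real.sqrt 2 = (c*c - 2*c - 1) / (2*c) := by
        rw [eq_div_iff (by positivity)]
        rw [hcdef]
        linear_combination hr - hs
      rw [heq]
      exact div_mem (sub_mem (sub_mem (mul_mem hcL hcL) (mul_mem h2L hcL)) (one_mem L))
        (mul_mem h2L hcL)
    have heq2 : Real.sqrt (4 + 2 * Real.sqrt 2) = c - 1 - Real.sqrt 2 := by
      rw [hcdef]; ring
    rw [heq2]
    exact sub_mem (sub_mem hcL (one_mem L)) hrL
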